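/- arXiv:2312.11675 — 3 statements merged into one kernel-verified Lean document; each statement's English description precedes it below -/
import Mathlib

section
/- Monotonicity of regression under strengthening: if partial assignments p and q satisfy that q extends p (every variable defined in p is defined in q with the same value), and both R(p,a,o) and R(q,a,o) are defined (p and q both consistent with outcome o), then R(q,a,o) extends R(p,a,o). -/
def Consistent {V D : Type} (p1 p2 : V → Option D) : Prop :=
  ∀ v, p1 v = none ∨ p2 v = none ∨ p1 v = p2 v

/-- Partial assignment `q` extends partial assignment `p`: every variable
defined in `p` is defined in `q` with the same value. -/
def PExtends {V D : Type} (q p : V → Option D) : Prop :=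
  ∀ v x, p v = some x → q v = some x

def regr {V D : Type} [DecidableEq D] (p pre o : V → Option D) : V → Option D :=
  fun v =>
    match pre v with
    | some x => some x
    | none => if p v = o v then none else p v

theorem regression_monotone {V D : Type} [Fintype V] [DecidableEq D]
    (p q pre o : V → Option D)
    (hqp : PExtends q p)
    (hpo : Consistent p o) (hqo : Consistent q o) :
    PExtends (regr q pre o) (regr p pre o) := by
  intro v x h
  unfold regr at *
  cases hpre : pre v with
  | some y => simp [hpre] at h ⊢; exact h
  | none =>
    simp [hpre] at h ⊢
    obtain ⟨hne, hpv⟩ := h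
    have hq : q v = some x := hqp v x hpv
    have hqne : ¬ q v = o v := by
      intro heq
      rcases hpo v with h1 | h1 | h1
      · simp [hpv] at h1
      · rw [h1] at heq; simp [hq] at heq
      · exact hne h1
    simp [hq] at hqne; simp [hqne, hq]
end

section
/- A strong plan reaches the goal along every execution: if π is a closed partial policy over a finite state space such that the directed graph of π-transitions (edges from s to each outcome of π(s), for non-goal s in the domain of π) is acyclic and every π-reachable non-goal state is in the domain of π, then every maximal execution sequence from the initial state under π is finite and terminates in a goal state. -/
/-- One π-transition: the policy prescribes action `a` in `s` and `s'` is one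
of its possible outcomes. -/
def PStep {S A : Type} (succ : S → A → Set S) (π : S → Option A) (s s' : S) : Prop :=
  ∃ a, π s = some a ∧ s' ∈ succ s a

/-- States reachable from `s0` under policy `π`. -/
def Reach {S A : Type} (succ : S → A → Set S) (π : S → Option A) (s0 s : S) : Prop :=
  Relation.ReflTransGen (PStep succ π) s0 s

/-- `π` is closed: every reachable non-goal state is assigned an applicable action. -/
def Closed {S A : Type} (succ : S → A → Set S) (exec : S → A → Prop)
    (G : Set S) (π : S → Option A) (s0 : S) : Prop :=
  ∀ s, Reach succ π s0 s → s ∉ G → ∃ a, π s = some a ∧ exec s a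

/-- `π` is a strong cyclic plan from `s0`: it is closed and from every
reachable state some π-execution reaches the goal. -/
def StrongCyclic {S A : Type} (succ : S → A → Set S) (exec : S → A → Prop)
    (G : Set S) (π : S → Option A) (s0 : S) : Prop :=
  Closed succ exec G π s0 ∧
    ∀ s, Reach succ π s0 s → ∃ g ∈ G, Relation.ReflTransGen (PStep succ π) s g

theorem strong_plan_terminates_in_goal {S A : Type} [Fintype S]
    (succ : S → A → Set S) (G : Set S) (π : S → Option A) (s0 : S)
    (hacyc : ∀ s, ¬ Relation.TransGen (PStep succ π) s s)
    (hne : ∀ s a, π s = some a → (succ s a).Nonempty)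
    (hdom : ∀ s, Reach succ π s0 s → s ∉ G → (π s).isSome) :
    (∀ f : ℕ → S, f 0 = s0 → ¬ (∀ i, PStep succ π (f i) (f (i + 1)))) ∧
    (∀ (f : ℕ → S) (n : ℕ), f 0 = s0 →
      (∀ i < n, PStep succ π (f i) (f (i + 1))) →
      (∀ i < n, f i ∉ G) →
      (f n ∈ G ∨ π (f n) = none) →
      f n ∈ G) := by
  constructor
  · intro f hf0 hstep
    have hinj : ¬ Function.Injective f := by
      intro hinj
      exact (Finite.of_injective f hinj).false
    rw [Function.not_injective_iff] at hinj
    obtain ⟨i, j, hij, hne'⟩ := hinj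
    wlog h : i < j generalizing i j
    · exact this j i hij.symm hne'.symm (by omega)
    have key : ∀ k l : ℕ, k < l → Relation.TransGen (PStep succ π) (f k) (f l) := by
      intro k l hkl
      induction l with
      | zero => omega
      | succ m ih =>
        rcases Nat.lt_succ_iff_lt_or_eq.mp hkl with h' | h'
        · exact (ih h').tail (hstep m)
        · subst h'; exact Relation.TransGen.single (hstep k)
    exact hacyc (f i) (hij ▸ key i j h)
  · intro f n hf0 hstep hng hlast
    rcases hlast with h | h
    · exact h
    by_contra hg
    have hreach : Reach succ π s0 (f n) := by
      rw [← hf0]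
      have : ∀ m ≤ n, Relation.ReflTransGen (PStep succ π) (f 0) (f m) := by
        intro m hm
        induction m with
        | zero => exact Relation.ReflTransGen.refl
        | succ k ih =>
          exact (ih (by omega)).tail (hstep k (by omega))
      exact this n le_rfl
    have := hdom (f n) hreach hg
    rw [h] at this
    simp at this
end

section
/- FSAP correctness propagates backwards: let D ⊆ S be a set of deadend states (no strong cyclic plan exists from any state in D, for a fixed finite FOND transition system). If state s has an action a such that some outcome of a applied in s lies in D, and forbidding all such (state, action) pairs leaves no applicable action in s, then s itself is a deadend (no strong cyclic plan exists from s). -/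
/-- `s` is a deadend: no strong cyclic plan rooted at `s` exists. -/
def Deadend {S A : Type} (succ : S → A → Set S) (exec : S → A → Prop)
    (G : Set S) (s : S) : Prop :=
  ¬ ∃ π : S → Option A, StrongCyclic succ exec G π s

theorem fsap_propagates_deadend {S A : Type} [Fintype S]
    (succ : S → A → Set S) (exec : S → A → Prop) (G : Set S)
    (hne : ∀ s a, exec s a → (succ s a).Nonempty)
    (D : Set S) (hD : ∀ d ∈ D, Deadend succ exec G d)
    (s : S) (hsG : s ∉ G)
    (hforbid : ∀ a, exec s a → ∃ s' ∈ succ s a, s' ∈ D) :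
    Deadend succ exec G s := by
  rintro ⟨π, hclosed, hgoal⟩
  obtain ⟨a, hπa, hexec⟩ := hclosed s Relation.ReflTransGen.refl hsG
  obtain ⟨s', hs', hsD⟩ := hforbid a hexec
  have hstep : PStep succ π s s' := ⟨a, hπa, hs'⟩
  have hreach : Reach succ π s s' := Relation.ReflTransGen.single hstep
  refine hD s' hsD ⟨π, ?_, ?_⟩
  · intro t ht htG
    exact hclosed t (hreach.trans ht) htG
  · intro t ht
    exact hgoal t (hreach.trans ht)
end
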